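/- If {Δ_1, …, Δ_l} is a reduction of a distribution Δ of Σ, then Δ is the greatest lower bound of {Δ_1, …, Δ_l} with respect to ≤_Σ. -/

import Mathlib

/-- A *distribution* of the (finite) alphabet `α`: a family of non-empty,
pairwise incomparable (under set inclusion) sub-alphabets whose union is `α`.
Its size is `comps.ncard`. -/
structure Distr (α : Type) [Fintype α] where
  comps : Set (Set α)
  comps_nonempty : ∀ S ∈ comps, S.Nonempty
  comps_cover : ∀ a : α, ∃ S ∈ comps, a ∈ S
  comps_incomp : ∀ S ∈ comps, ∀ T ∈ comps, S ≠ T → ¬ S ⊆ T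

section Defs

variable {α : Type} [Fintype α]

/-- Natural projection `P_{Σ'}`: erase from a string all symbols not in `S`. -/
noncomputable def projA (S : Set α) (s : List α) : List α :=
  s.filter fun a => @decide (a ∈ S) (Classical.propDecidable _)

/-- `L` is decomposable with respect to `Δ`:
`L = ∥_i P_{Σ_i}(L) = ⋂_i P_{Σ_i}⁻¹(P_{Σ_i}(L))`. -/
def Decomposable (L : Set (List α)) (Δ : Distr α) : Prop :=
  L = ⋂ S ∈ Δ.comps, projA S ⁻¹' (projA S '' L)

/-- The partial order `≤_Σ` on distributions: every component of `Δ` is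
contained in some component of `Δ'`. -/
def DistLE (Δ Δ' : Distr α) : Prop :=
  ∀ S ∈ Δ.comps, ∃ T ∈ Δ'.comps, S ⊆ T

/-- `P` is a *reduction* of `Δ`. -/
def IsReduction (P : Set (Distr α)) (Δ : Distr α) : Prop :=
  2 ≤ P.ncard ∧
  (∀ Δ' ∈ P, Δ'.comps.ncard < Δ.comps.ncard) ∧
  (∀ L : Set (List α), Decomposable L Δ ↔ ∀ Δ' ∈ P, Decomposable L Δ')

/-- The maximal members (under set inclusion) of a family of sets. -/
def MaximalMem {β : Type} (F : Set (Set β)) : Set (Set β) :=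
  {S | S ∈ F ∧ ∀ T ∈ F, S ⊆ T → S = T}

/-- The dependence relation `D_Δ`. -/
def DepRel (Δ : Distr α) : Set (α × α) :=
  {p | ∃ S ∈ Δ.comps, p.1 ∈ S ∧ p.2 ∈ S}

/-- The independence relation `I_Δ = Σ × Σ − D_Δ`. -/
def IndepRel (Δ : Distr α) : Set (α × α) :=
  {p | ¬ ∃ S ∈ Δ.comps, p.1 ∈ S ∧ p.2 ∈ S}

/-- `Σ' ⊑ Δ`: `Σ'` is contained in some component of `Δ`. -/
def SqSub (S : Set α) (Δ : Distr α) : Prop :=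
  ∃ T ∈ Δ.comps, S ⊆ T

/-- `Δ` is the greatest lower bound of the family `D` with respect to `≤_Σ`. -/
def IsGLBFam {l : ℕ} (D : Fin l → Distr α) (Δ : Distr α) : Prop :=
  (∀ i, DistLE Δ (D i)) ∧
  ∀ Δ''' : Distr α, (∀ i, DistLE Δ''' (D i)) → DistLE Δ''' Δ

/-- `Δ'` is *merged* from `Δ`: `Δ' ≠ (Σ)` and `Δ'` is obtained from a
partition of the components of `Δ` having at least one block of size ≥ 2 by
taking the unions over the blocks and keeping only the maximal resulting
sub-alphabets. -/
def MergedFrom (Δ' Δ : Distr α) : Prop :=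
  Δ'.comps ≠ {Set.univ} ∧
  ∃ part : Set (Set (Set α)),
    (∀ B ∈ part, B.Nonempty) ∧
    (∀ B ∈ part, B ⊆ Δ.comps) ∧
    (∀ B ∈ part, ∀ C ∈ part, B ≠ C → Disjoint B C) ∧
    (∀ S ∈ Δ.comps, ∃ B ∈ part, S ∈ B) ∧
    (∃ B ∈ part, ∃ S ∈ B, ∃ T ∈ B, S ≠ T) ∧
    Δ'.comps = MaximalMem {U : Set α | ∃ B ∈ part, U = ⋃₀ B}

/-- Membership in the search space `S_Δ`: a set of distributions merged from
`Δ` that are pairwise `≤_Σ`-incomparable. -/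
def MemS (Δ : Distr α) (P : Set (Distr α)) : Prop :=
  (∀ Δ' ∈ P, MergedFrom Δ' Δ) ∧
  ∀ Δ₁ ∈ P, ∀ Δ₂ ∈ P, Δ₁ ≠ Δ₂ → ¬ DistLE Δ₁ Δ₂

/-- The ordering `≤_Δ` on sets of distributions: every member of `Q` has a
member of `P` below it with respect to `≤_Σ`. -/
def SetLE (P Q : Set (Distr α)) : Prop :=
  ∀ Δ' ∈ Q, ∃ Δ'' ∈ P, DistLE Δ'' Δ'

/-- `[F]`: the `≤_Σ`-minimal members of a set of distributions. -/
def MinimalD (F : Set (Distr α)) : Set (Distr α) :=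
  {Δ' | Δ' ∈ F ∧ ∀ Δ'' ∈ F, DistLE Δ'' Δ' → DistLE Δ' Δ''}

/-- `Δ'` is obtained from `Δ` by merging exactly two components `S ≠ T`
(and keeping only the maximal sub-alphabets); the members of `⊥(Δ)`. -/
def MinMergedFrom (Δ' Δ : Distr α) : Prop :=
  ∃ S ∈ Δ.comps, ∃ T ∈ Δ.comps, S ≠ T ∧
    Δ'.comps = MaximalMem ((Δ.comps \ {S, T}) ∪ {S ∪ T})

/-- The set `A(Δ)` of shared symbols of a distribution. -/
def SharedSyms (Δ : Distr α) : Set α :=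
  {a | ∃ S ∈ Δ.comps, ∃ T ∈ Δ.comps, S ≠ T ∧ a ∈ S ∧ a ∈ T}

/-- The substitution of `Δ'` into the component `C` of `Δ''` yields `Δs`:
`Δs` is obtained from the components of `Δ''` other than `C` together with the
intersections `C ∩ S` for components `S` of `Δ'`, keeping only the maximal
non-empty members. -/
def SubstResult (Δ' Δ'' : Distr α) (C : Set α) (Δs : Distr α) : Prop :=
  Δs.comps =
    MaximalMem {T : Set α |
      T.Nonempty ∧ (T ∈ Δ''.comps \ {C} ∨ ∃ S ∈ Δ'.comps, T = C ∩ S)}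

/-- One swap of two adjacent symbols forming a pair in `I`. -/
def SwapStep (I : Set (α × α)) (s t : List α) : Prop :=
  ∃ (u v : List α) (a b : α),
    (a, b) ∈ I ∧ s = u ++ a :: b :: v ∧ t = u ++ b :: a :: v

/-- Trace equivalence with respect to `I`: a finite sequence of swaps of
adjacent independent symbols. -/
def TraceEquiv (I : Set (α × α)) : List α → List α → Prop :=
  Relation.ReflTransGen (SwapStep I)

/-- `L` is trace-closed with respect to `I`. -/
def TraceClosed (I : Set (α × α)) (L : Set (List α)) : Prop :=
  L = {t | ∃ s ∈ L, TraceEquiv I s t}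

/-- The map `N` determined by the enumeration `c` of the components of a
distribution: `N(a) = {i : a ∉ Σ_i}`. -/
def Nmap {n : ℕ} (c : Fin n → Set α) (a : α) : Set (Fin n) :=
  {i | a ∉ c i}

/-- A simple path from `x` to `y` in the graph `(Σ, D)`: a list of pairwise
distinct symbols, starting at `x`, ending at `y`, with consecutive symbols
related by `D`. -/
def IsSimplePath (D : Set (α × α)) (p : List α) (x y : α) : Prop :=
  p.Nodup ∧ p.head? = some x ∧ p.getLast? = some y ∧
    p.Chain' (fun a b => (a, b) ∈ D)

/-- `Cr_D(S, y)` (with `N` given by the enumeration `c`): the set of indices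
`i` such that some simple path `p` from some `x ∈ S` to `y` in `(Σ, D)`
satisfies `i ∈ ⋂_{a ∈ p.dropLast} N(a)`. -/
def CrSet {n : ℕ} (c : Fin n → Set α) (D : Set (α × α)) (S : Set α) (y : α) :
    Set (Fin n) :=
  {i | ∃ x ∈ S, ∃ p : List α,
    IsSimplePath D p x y ∧ ∀ a ∈ p.dropLast, i ∈ Nmap c a}

/-- The smallest set of distributions containing `Q` and closed under
substitution. -/
inductive SubstClosure (Q : Set (Distr α)) : Distr α → Prop
  | base (Δ' : Distr α) (h : Δ' ∈ Q) : SubstClosure Q Δ'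
  | step (Δ' Δ'' Δs : Distr α) (C : Set α)
      (h1 : SubstClosure Q Δ') (h2 : SubstClosure Q Δ'')
      (hC : C ∈ Δ''.comps) (hA : SharedSyms Δ' ⊆ C)
      (hs : SubstResult Δ' Δ'' C Δs) : SubstClosure Q Δs

end Defs

section Count

variable {α : Type} [Fintype α] [DecidableEq α]

/-- `L(Σ_j)` (with `j` 0-indexed, so the paper's exponent `j+1` is `j+2`
here): all strings containing exactly one occurrence of each `σ_i ∈ Σ_j` and
exactly `j+2` occurrences of each `σ_i ∉ Σ_j`. -/
def Lword {m : ℕ} (σ : Fin m → α) (Sj : Set α) (j : ℕ) : Set (List α) :=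
  {s | ∀ i : Fin m,
    (σ i ∈ Sj → s.count (σ i) = 1) ∧ (σ i ∉ Sj → s.count (σ i) = j + 2)}

/-- The candidate counter example `L_cand = ⋃_j L(Σ_j)`, relative to an
enumeration `c` of the components and an enumeration `σ` of the alphabet. -/
def Lcand {n m : ℕ} (c : Fin n → Set α) (σ : Fin m → α) : Set (List α) :=
  ⋃ j : Fin n, Lword σ (c j) (j : ℕ)

end Count


section Aux

variable {α : Type}

attribute [local instance] Classical.propDecidable

/-- Classical count of occurrences of `a` in `s`. -/
noncomputable def cnt (a : α) (s : List α) : ℕ :=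
  s.countP fun b => @decide (b = a) (Classical.propDecidable _)

lemma cnt_append (a : α) (s t : List α) : cnt a (s ++ t) = cnt a s + cnt a t :=
  List.countP_append

lemma cnt_cons (a b : α) (s : List α) :
    cnt a (b :: s) = cnt a s + (if b = a then 1 else 0) := by
  simp only [cnt, List.countP_cons]
  by_cases h : b = a <;> simp [h]

lemma cnt_projA_mem {T : Set α} {a : α} (h : a ∈ T) (s : List α) :
    cnt a (projA T s) = cnt a s := by
  induction s with
  | nil => rfl
  | cons b s ih =>
    simp only [projA, List.filter_cons] at *
    by_cases hb : b ∈ T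
    · rw [if_pos (decide_eq_true hb), cnt_cons, cnt_cons, ih]
    · rw [if_neg (by simpa using hb), ih, cnt_cons]
      have hba : ¬ b = a := fun e => hb (e ▸ h)
      simp [hba]

lemma cnt_projA_not_mem {T : Set α} {a : α} (h : a ∉ T) (s : List α) :
    cnt a (projA T s) = 0 := by
  induction s with
  | nil => rfl
  | cons b s ih =>
    simp only [projA, List.filter_cons] at *
    by_cases hb : b ∈ T
    · rw [if_pos (decide_eq_true hb), cnt_cons, ih]
      have hba : ¬ b = a := fun e => h (e ▸ hb)
      simp [hba]
    · rw [if_neg (by simpa using hb), ih]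

lemma mem_iff_cnt_pos (a : α) (s : List α) : a ∈ s ↔ 0 < cnt a s := by
  induction s with
  | nil => simp [cnt]
  | cons b s ih =>
    rw [cnt_cons]
    by_cases hba : b = a
    · subst hba; simp
    · simp only [if_neg hba, Nat.add_zero, List.mem_cons, ← ih]
      constructor
      · rintro (h | h)
        · exact absurd h.symm hba
        · exact h
      · exact Or.inr

lemma cnt_eq_one_of_nodup {a : α} {s : List α} (hn : s.Nodup) (ha : a ∈ s) :
    cnt a s = 1 := by
  induction s with
  | nil => simp at ha
  | cons b s ih =>
    simp only [List.nodup_cons] at hn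
    rw [cnt_cons]
    rcases List.mem_cons.mp ha with h | h
    · subst h
      have h0 : cnt a s = 0 := by
        by_contra h0
        exact hn.1 ((mem_iff_cnt_pos a s).mpr (Nat.pos_of_ne_zero h0))
      simp [h0]
    · have hba : ¬ b = a := fun e => hn.1 (e ▸ h)
      simp [hba, ih hn.2 h]

lemma projA_eq_self {T : Set α} {s : List α} (h : ∀ a ∈ s, a ∈ T) :
    projA T s = s := by
  rw [projA, List.filter_eq_self]
  intro a ha; exact decide_eq_true (h a ha)

lemma mem_of_mem_projA {T : Set α} {s : List α} {a : α} (h : a ∈ projA T s) :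
    a ∈ T := by
  have := (List.mem_filter.mp h).2
  simpa using this

variable [Fintype α]

/-- The counting language: strings over `S` in which, for some `T ∈ F`,
letters of `S ∩ T` occur once and letters of `S \ T` occur twice. -/
noncomputable def Lx (S : Set α) (F : Set (Set α)) : Set (List α) :=
  {s | ∃ T ∈ F,
    (∀ a ∈ S ∩ T, cnt a s = 1) ∧ (∀ a ∈ S \ T, cnt a s = 2) ∧
    ∀ a, a ∉ S → cnt a s = 0}

lemma Lx_letters {S : Set α} {F : Set (Set α)} :
    ∀ s ∈ Lx S F, ∀ a ∈ s, a ∈ S := by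
  rintro s ⟨T, _, _, _, h3⟩ a ha
  by_contra haS
  have := (mem_iff_cnt_pos a s).mp ha
  rw [h3 a haS] at this
  exact Nat.lt_irrefl 0 this

/-- Any language whose words use only letters of a component is decomposable. -/
lemma decomposable_of_component (Δ' : Distr α) {T0 : Set α}
    (hT0 : T0 ∈ Δ'.comps) {L : Set (List α)}
    (hL : ∀ s ∈ L, ∀ a ∈ s, a ∈ T0) : Decomposable L Δ' := by
  apply Set.Subset.antisymm
  · intro w hw
    exact Set.mem_iInter₂.mpr fun T _ => ⟨w, hw, rfl⟩
  · intro w hw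
    have hw' : ∀ T ∈ Δ'.comps, ∃ u ∈ L, projA T u = projA T w := by
      intro T hT
      obtain ⟨u, hu, he⟩ := Set.mem_iInter₂.mp hw T hT
      exact ⟨u, hu, he⟩
    have hlet : ∀ d ∈ w, d ∈ T0 := by
      intro d hd
      by_contra hdT0
      obtain ⟨T', hT', hdT'⟩ := Δ'.comps_cover d
      obtain ⟨u, hu, he⟩ := hw' T' hT'
      have h1 : cnt d (projA T' w) = cnt d w := cnt_projA_mem hdT' w
      have h2 : cnt d u = 0 := by
        by_contra h0
        exact hdT0 (hL u hu d ((mem_iff_cnt_pos d u).mpr (Nat.pos_of_ne_zero h0)))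
      have h3 : cnt d (projA T' u) = cnt d u := cnt_projA_mem hdT' u
      have h4 := (mem_iff_cnt_pos d w).mp hd
      rw [he, h1] at h3
      omega
    obtain ⟨u, hu, he⟩ := hw' T0 hT0
    rw [projA_eq_self (hL u hu), projA_eq_self hlet] at he
    rwa [← he]

/-- If no component of `Δ'` contains `S`, then `Lx S Δ'.comps` is not
decomposable with respect to `Δ'`. -/
lemma not_decomposable_Lx {Δ' : Distr α} {S : Set α} (hS : S.Nonempty)
    (hn : ∀ T ∈ Δ'.comps, ¬ S ⊆ T) : ¬ Decomposable (Lx S Δ'.comps) Δ' := by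
  have hfin : S.Finite := Set.toFinite S
  set w := hfin.toFinset.toList with hwdef
  have hwnd : w.Nodup := Finset.nodup_toList _
  have hwmem : ∀ a, a ∈ w ↔ a ∈ S := by
    intro a; rw [hwdef, Finset.mem_toList, Set.Finite.mem_toFinset]
  have hcntS : ∀ a ∈ S, cnt a w = 1 := fun a ha =>
    cnt_eq_one_of_nodup hwnd ((hwmem a).mpr ha)
  have hcntn : ∀ a, a ∉ S → cnt a w = 0 := by
    intro a ha
    by_contra h0
    exact ha ((hwmem a).mp ((mem_iff_cnt_pos a w).mpr (Nat.pos_of_ne_zero h0)))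
  have hwL : w ∉ Lx S Δ'.comps := by
    rintro ⟨T, hT, h1, h2, h3⟩
    obtain ⟨a, haS, haT⟩ := Set.not_subset.mp (hn T hT)
    have e2 := h2 a ⟨haS, haT⟩
    have e1 := hcntS a haS
    omega
  intro hdec
  apply hwL
  rw [hdec]
  refine Set.mem_iInter₂.mpr fun T hT => ?_
  set r := projA Tᶜ w with hrdef
  have hcr_mem : ∀ a ∈ T, cnt a r = 0 := fun a ha =>
    cnt_projA_not_mem (by simpa using ha) w
  have hcr_not : ∀ a, a ∉ T → cnt a r = cnt a w := fun a ha =>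
    cnt_projA_mem (by simpa using ha) w
  refine ⟨projA T w ++ (r ++ r), ⟨T, hT, ?_, ?_, ?_⟩, ?_⟩
  · rintro a ⟨haS, haT⟩
    rw [cnt_append, cnt_append, cnt_projA_mem haT, hcr_mem a haT, hcntS a haS]
  · rintro a ⟨haS, haT⟩
    rw [cnt_append, cnt_append, cnt_projA_not_mem haT, hcr_not a haT, hcntS a haS]
  · intro a ha
    have h0 := hcntn a ha
    rw [cnt_append, cnt_append]
    by_cases haT : a ∈ T
    · rw [cnt_projA_mem haT, hcr_mem a haT, h0]
    · rw [cnt_projA_not_mem haT, hcr_not a haT, h0]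
  · show projA T (projA T w ++ (r ++ r)) = projA T w
    have h1 : projA T (projA T w) = projA T w :=
      projA_eq_self fun a ha => mem_of_mem_projA ha
    have h2 : projA T r = [] := by
      rw [projA, List.filter_eq_nil_iff]
      intro a ha
      have : a ∈ Tᶜ := mem_of_mem_projA ha
      simpa using this
    simp only [projA, List.filter_append] at *
    rw [h1, h2]
    simp

end Aux

/-- If `P` is a reduction of `Δ`, then `Δ` is the greatest
lower bound of `P` with respect to `≤_Σ`. -/
theorem statement_1 {α : Type} [Fintype α] (Δ : Distr α) (P : Set (Distr α))
    (h : IsReduction P Δ) :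
    (∀ Δi ∈ P, DistLE Δ Δi) ∧
    ∀ Δ''' : Distr α, (∀ Δi ∈ P, DistLE Δ''' Δi) → DistLE Δ''' Δ := by
  obtain ⟨-, -, hiff⟩ := h
  constructor
  · intro Δi hΔi S hS
    by_contra hnc
    push_neg at hnc
    have hSne := Δ.comps_nonempty S hS
    have hdec : Decomposable (Lx S Δi.comps) Δ :=
      decomposable_of_component Δ hS Lx_letters
    exact not_decomposable_Lx hSne hnc (((hiff _).mp hdec) Δi hΔi)
  · intro Δ3 hlow S hS
    by_contra hnc
    push_neg at hnc
    have hSne := Δ3.comps_nonempty S hS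
    have hdec : Decomposable (Lx S Δ.comps) Δ := by
      refine (hiff _).mpr fun Δi hΔi => ?_
      obtain ⟨T, hT, hST⟩ := hlow Δi hΔi S hS
      exact decomposable_of_component Δi hT
        fun s hs a ha => hST (Lx_letters s hs a ha)
    exact not_decomposable_Lx hSne hnc hdec
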